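/- arXiv:1111.7077 — 3 statements merged into one kernel-verified Lean document; each statement's English description precedes it below -/
import Mathlib

section
/- Let φ: [0,∞) → ℝ be a continuous function with φ(0) = 1 that belongs to the class Φ_1 and satisfies φ(t) = 0 for all t ≥ π. Then the restriction ψ = φ|_{[0,π]} belongs to the class Ψ_1. -/
open scoped BigOperators

noncomputable section

/-- `ψ` composed with the great circle distance is positive definite on the
sphere `S^d ⊆ ℝ^(d+1)`. -/
def IsPosDefOnSphere (d : ℕ) (ψ : ℝ → ℝ) : Prop :=
  ∀ (n : ℕ) (x : Fin n → EuclideanSpace ℝ (Fin (d + 1))),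
    (∀ i, ‖x i‖ = 1) → Function.Injective x →
    ∀ c : Fin n → ℝ,
      0 ≤ ∑ i, ∑ j, c i * c j * ψ (Real.arccos ((inner ℝ (x i) (x j) : ℝ)))

/-- `ψ` composed with the great circle distance is strictly positive definite on
the sphere `S^d ⊆ ℝ^(d+1)`. -/
def IsStrictPosDefOnSphere (d : ℕ) (ψ : ℝ → ℝ) : Prop :=
  ∀ (n : ℕ) (x : Fin n → EuclideanSpace ℝ (Fin (d + 1))),
    (∀ i, ‖x i‖ = 1) → Function.Injective x →
    ∀ c : Fin n → ℝ, c ≠ 0 →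
      0 < ∑ i, ∑ j, c i * c j * ψ (Real.arccos ((inner ℝ (x i) (x j) : ℝ)))

/-- The class `Ψ_d`. -/
def memPsi (d : ℕ) (ψ : ℝ → ℝ) : Prop :=
  ContinuousOn ψ (Set.Icc 0 Real.pi) ∧ ψ 0 = 1 ∧ IsPosDefOnSphere d ψ

/-- The class `Ψ_d^+`. -/
def memPsiPlus (d : ℕ) (ψ : ℝ → ℝ) : Prop :=
  ContinuousOn ψ (Set.Icc 0 Real.pi) ∧ ψ 0 = 1 ∧ IsStrictPosDefOnSphere d ψ

/-- `φ` composed with the Euclidean distance is positive definite on `ℝ^d`. -/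
def IsPosDefOnEuclidean (d : ℕ) (φ : ℝ → ℝ) : Prop :=
  ∀ (n : ℕ) (x : Fin n → EuclideanSpace ℝ (Fin d)), Function.Injective x →
    ∀ c : Fin n → ℝ, 0 ≤ ∑ i, ∑ j, c i * c j * φ (‖x i - x j‖)

/-- The class `Φ_d`. -/
def memPhi (d : ℕ) (φ : ℝ → ℝ) : Prop :=
  ContinuousOn φ (Set.Ici 0) ∧ φ 0 = 1 ∧ IsPosDefOnEuclidean d φ

open Real


lemma cnt_aux (N : ℕ) (hN : 1 ≤ N) (m : ℤ) (hm : m = 0 ∨ m = 1 ∨ m = -1) (r : ℝ) :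
    ∑ k : Fin N, ∑ l : Fin N, (if (((k : ℕ) : ℤ) - ((l : ℕ) : ℤ) = m) then r else 0)
      = ((N : ℝ) - (m.natAbs : ℝ)) * r := by
  have key : ∀ k : Fin N,
      (∑ l : Fin N, (if (((k : ℕ) : ℤ) - ((l : ℕ) : ℤ) = m) then r else 0))
        = if (0 ≤ ((k:ℕ):ℤ) - m ∧ ((k:ℕ):ℤ) - m < N) then r else 0 := by
    intro k
    by_cases hk : 0 ≤ ((k:ℕ):ℤ) - m ∧ ((k:ℕ):ℤ) - m < N
    · rw [if_pos hk, Finset.sum_eq_single (⟨(((k:ℕ):ℤ) - m).toNat, by omega⟩ : Fin N)]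
      · rw [if_pos (by simp; omega)]
      · intro l _ hl
        rw [if_neg]
        intro h
        exact hl (by apply Fin.ext; simp; omega)
      · intro h; exact absurd (Finset.mem_univ _) h
    · rw [if_neg hk, Finset.sum_eq_zero]
      intro l _
      rw [if_neg]
      intro h
      exact hk (by constructor <;> omega)
  rw [Finset.sum_congr rfl (fun k _ => key k)]
  rw [Fin.sum_univ_eq_sum_range (fun k => if (0 ≤ ((k:ℕ):ℤ) - m ∧ ((k:ℕ):ℤ) - m < N) then r else 0) N]
  rw [Finset.sum_ite, Finset.sum_const, Finset.sum_const, smul_zero, add_zero]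
  have hcard : (Finset.filter (fun k => 0 ≤ ((k:ℕ):ℤ) - m ∧ ((k:ℕ):ℤ) - m < N) (Finset.range N)).card
      = N - m.natAbs := by
    rcases hm with h | h | h <;> subst h
    · have : (Finset.filter (fun k => 0 ≤ ((k:ℕ):ℤ) - 0 ∧ ((k:ℕ):ℤ) - 0 < N) (Finset.range N))
          = Finset.range N := by
        ext a; simp
      rw [this]; simp
    · have : (Finset.filter (fun k => 0 ≤ ((k:ℕ):ℤ) - 1 ∧ ((k:ℕ):ℤ) - 1 < N) (Finset.range N))
          = Finset.Ico 1 N := by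
        ext a; simp [Finset.mem_Ico]; omega
      rw [this, Nat.card_Ico]; rfl
    · have : (Finset.filter (fun k => 0 ≤ ((k:ℕ):ℤ) - (-1) ∧ ((k:ℕ):ℤ) - (-1) < N) (Finset.range N))
          = Finset.range (N - 1) := by
        ext a; simp; omega
      rw [this, Finset.card_range]; rfl
  rw [hcard, nsmul_eq_mul]
  have hle : m.natAbs ≤ N := by rcases hm with h | h | h <;> subst h <;> simp <;> omega
  rw [Nat.cast_sub hle]


lemma key_shift (φ : ℝ → ℝ) (hsupp : ∀ t : ℝ, π ≤ t → φ t = 0)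
    (δ : ℝ) (hδ1 : -(2*π) < δ) (hδ2 : δ < 2*π) :
    ∃ m : ℤ, (m = 0 ∨ m = 1 ∨ m = -1) ∧
      ∀ k : ℤ, φ (|δ + 2*π*(k:ℝ)|) = if k = m then φ (Real.arccos (Real.cos δ)) else 0 := by
  have hπ := Real.pi_pos
  rcases le_or_gt |δ| π with h | h
  · refine ⟨0, Or.inl rfl, fun k => ?_⟩
    by_cases hk : k = 0
    · subst hk
      rw [if_pos rfl]
      rw [← Real.cos_abs δ, Real.arccos_cos (abs_nonneg δ) h]
      norm_num
    · rw [if_neg hk]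
      apply hsupp
      have h1 : (1:ℝ) ≤ |(k:ℝ)| := by
        rw [← Int.cast_abs]
        exact_mod_cast Int.one_le_abs hk
      have h2 : |2*π*(k:ℝ)| = 2*π*|(k:ℝ)| := by
        rw [abs_mul, abs_of_pos (by positivity : (0:ℝ) < 2*π)]
      have h3 : |2*π*(k:ℝ)| ≤ |δ + 2*π*(k:ℝ)| + |δ| := by
        calc |2*π*(k:ℝ)| = |(δ + 2*π*(k:ℝ)) + (-δ)| := by ring_nf
          _ ≤ |δ + 2*π*(k:ℝ)| + |(-δ)| := abs_add_le _ _
          _ = |δ + 2*π*(k:ℝ)| + |δ| := by rw [abs_neg]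
      nlinarith [h2, h3, h1]
  · rcases lt_or_ge δ 0 with hneg | hpos
    · -- δ ∈ (-2π, -π)
      have hδπ : δ < -π := by rw [abs_of_neg hneg] at h; linarith
      have hθ : Real.arccos (Real.cos δ) = δ + 2*π := by
        rw [← Real.cos_add_two_pi δ]
        exact Real.arccos_cos (by linarith) (by linarith)
      refine ⟨1, Or.inr (Or.inl rfl), fun k => ?_⟩
      by_cases hk : k = 1
      · subst hk
        rw [if_pos rfl, hθ]
        rw [show |δ + 2*π*((1:ℤ):ℝ)| = |δ + 2*π| by norm_num]
        rw [abs_of_nonneg (by linarith)]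
      · rw [if_neg hk]
        apply hsupp
        have : k ≤ 0 ∨ 2 ≤ k := by omega
        rcases this with hk' | hk'
        · have : (k:ℝ) ≤ 0 := by exact_mod_cast hk'
          have : δ + 2*π*(k:ℝ) ≤ -π := by nlinarith
          calc π ≤ -(δ + 2*π*(k:ℝ)) := by linarith
            _ ≤ |δ + 2*π*(k:ℝ)| := neg_le_abs _
        · have : (2:ℝ) ≤ (k:ℝ) := by exact_mod_cast hk'
          have : π ≤ δ + 2*π*(k:ℝ) := by nlinarith
          calc π ≤ δ + 2*π*(k:ℝ) := this
            _ ≤ |δ + 2*π*(k:ℝ)| := le_abs_self _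
    · -- δ ∈ (π, 2π)
      have hδπ : π < δ := by rwa [abs_of_nonneg hpos] at h
      have hθ : Real.arccos (Real.cos δ) = -(δ - 2*π) := by
        rw [show Real.cos δ = Real.cos (-(δ - 2*π)) by rw [Real.cos_neg, Real.cos_sub_two_pi]]
        exact Real.arccos_cos (by linarith) (by linarith)
      refine ⟨-1, Or.inr (Or.inr rfl), fun k => ?_⟩
      by_cases hk : k = -1
      · subst hk
        rw [if_pos rfl, hθ]
        rw [show |δ + 2*π*((-1:ℤ):ℝ)| = |δ - 2*π| by norm_num [sub_eq_add_neg]]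
        rw [abs_of_nonpos (by linarith)]
      · rw [if_neg hk]
        apply hsupp
        have : k ≤ -2 ∨ 0 ≤ k := by omega
        rcases this with hk' | hk'
        · have : (k:ℝ) ≤ -2 := by exact_mod_cast hk'
          have : δ + 2*π*(k:ℝ) ≤ -π := by nlinarith
          calc π ≤ -(δ + 2*π*(k:ℝ)) := by linarith
            _ ≤ |δ + 2*π*(k:ℝ)| := neg_le_abs _
        · have : (0:ℝ) ≤ (k:ℝ) := by exact_mod_cast hk'
          have : π ≤ δ + 2*π*(k:ℝ) := by nlinarith
          calc π ≤ δ + 2*π*(k:ℝ) := this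
            _ ≤ |δ + 2*π*(k:ℝ)| := le_abs_self _

/-- If `φ ∈ Φ_1` vanishes beyond `π`, then its restriction to
`[0,π]` belongs to `Ψ_1`. -/
theorem stmt_0 (φ : ℝ → ℝ) (hφ : memPhi 1 φ)
    (hsupp : ∀ t : ℝ, Real.pi ≤ t → φ t = 0) :
    memPsi 1 φ := by
  obtain ⟨hcont, hone, hpd⟩ := hφ
  refine ⟨hcont.mono (fun t ht => ht.1), hone, ?_⟩
  intro n x hx1 hxinj c
  have hπ := Real.pi_pos
  classical
  set z : Fin n → ℂ := fun i => ⟨x i 0, x i 1⟩ with hzdef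
  have hz1 : ∀ i, ‖z i‖ = 1 := by
    intro i
    have hn := hx1 i
    rw [EuclideanSpace.norm_eq, Fin.sum_univ_two] at hn
    rw [Complex.norm_def, hzdef]
    simp only [Complex.normSq_mk]
    rw [show x i 0 * x i 0 + x i 1 * x i 1 = ‖x i 0‖^2 + ‖x i 1‖^2 by
      simp [Real.norm_eq_abs, sq_abs]; ring]
    exact hn
  have hzne : ∀ i, z i ≠ 0 := by
    intro i h
    have := hz1 i
    rw [h] at this
    simp at this
  set α : Fin n → ℝ := fun i => (z i).arg with hαdef
  have hcos : ∀ i, Real.cos (α i) = x i 0 := by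
    intro i
    rw [hαdef]
    simp only
    rw [Complex.cos_arg (hzne i), hz1 i]
    simp [hzdef]
  have hsin : ∀ i, Real.sin (α i) = x i 1 := by
    intro i
    rw [hαdef]
    simp only
    rw [Complex.sin_arg, hz1 i]
    simp [hzdef]
  have hαinj : ∀ i j, α i = α j → i = j := by
    intro i j hij
    apply hxinj
    have h0 : x i 0 = x j 0 := by rw [← hcos i, ← hcos j, hij]
    have h1 : x i 1 = x j 1 := by rw [← hsin i, ← hsin j, hij]
    ext t
    fin_cases t
    · exact h0
    · exact h1
  have hα1 : ∀ i, -π < α i := fun i => Complex.neg_pi_lt_arg (z i)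
  have hα2 : ∀ i, α i ≤ π := fun i => Complex.arg_le_pi (z i)
  have hinner : ∀ i j, (inner ℝ (x i) (x j) : ℝ) = Real.cos (α i - α j) := by
    intro i j
    rw [Real.cos_sub, hcos, hcos, hsin, hsin]
    rw [PiLp.inner_apply, Fin.sum_univ_two]
    simp [RCLike.inner_apply]; ring
  have key : ∀ i j : Fin n, ∃ m : ℤ, (m = 0 ∨ m = 1 ∨ m = -1) ∧
      ∀ k : ℤ, φ (|α i - α j + 2*π*(k:ℝ)|)
        = if k = m then φ (Real.arccos (Real.cos (α i - α j))) else 0 := by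
    intro i j
    exact key_shift φ hsupp _ (by linarith [hα1 i, hα2 i, hα1 j, hα2 j])
      (by linarith [hα1 i, hα2 i, hα1 j, hα2 j])
  choose m hm1 hm2 using key
  set θ : Fin n → Fin n → ℝ := fun i j => Real.arccos (Real.cos (α i - α j)) with hθdef
  have hgoal : (∑ i, ∑ j, c i * c j * φ (Real.arccos ((inner ℝ (x i) (x j) : ℝ))))
      = ∑ i, ∑ j, c i * c j * φ (θ i j) :=
    Finset.sum_congr rfl fun i _ => Finset.sum_congr rfl fun j _ => by rw [hinner i j]
  rw [hgoal]
  set S : ℝ := ∑ i, ∑ j, c i * c j * φ (θ i j) with hSdef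
  set B : ℝ := ∑ i, ∑ j, c i * c j * (((m i j).natAbs : ℝ) * φ (θ i j)) with hBdef
  have main : ∀ N : ℕ, 1 ≤ N → B ≤ (N : ℝ) * S := by
    intro N hN
    set Y : Fin n × Fin N → EuclideanSpace ℝ (Fin 1) :=
      fun p => WithLp.toLp 2 (fun _ => α p.1 + 2*π*((p.2 : ℕ) : ℝ)) with hYdef
    have hYinj : Function.Injective Y := by
      intro p q hpq
      have hval : α p.1 + 2*π*((p.2:ℕ):ℝ) = α q.1 + 2*π*((q.2:ℕ):ℝ) := congrArg (fun v => v 0) hpq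
      have h2 : p.2 = q.2 := by
        by_contra hne
        have hnev : ((p.2:ℕ):ℤ) - ((q.2:ℕ):ℤ) ≠ 0 := by
          intro h
          exact hne (Fin.ext (by omega))
        have h1le : (1:ℤ) ≤ |((p.2:ℕ):ℤ) - ((q.2:ℕ):ℤ)| := Int.one_le_abs hnev
        have h1leR : (1:ℝ) ≤ |((p.2:ℕ):ℝ) - ((q.2:ℕ):ℝ)| := by
          exact_mod_cast h1le
        have habs : |α p.1 - α q.1| < 2*π := by
          rw [abs_lt]
          constructor <;> [linarith [hα1 p.1, hα2 q.1]; linarith [hα2 p.1, hα1 q.1]]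
        have heq : α p.1 - α q.1 = 2*π*(((q.2:ℕ):ℝ) - ((p.2:ℕ):ℝ)) := by linarith
        rw [heq, abs_mul, abs_of_pos (by positivity : (0:ℝ) < 2*π), abs_sub_comm] at habs
        nlinarith
      have hαeq : α p.1 = α q.1 := by
        rw [h2] at hval
        linarith
      exact Prod.ext (hαinj _ _ hαeq) h2
    set X : Fin (n*N) → EuclideanSpace ℝ (Fin 1) := fun p' => Y (finProdFinEquiv.symm p') with hXdef
    set C : Fin (n*N) → ℝ := fun p' => c (finProdFinEquiv.symm p').1 with hCdef
    have hXinj : Function.Injective X := hYinj.comp (Equiv.injective _)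
    have hT := hpd (n*N) X hXinj C
    have hT2 : (∑ p' : Fin (n*N), ∑ q' : Fin (n*N), C p' * C q' * φ (‖X p' - X q'‖))
        = ∑ p : Fin n × Fin N, ∑ q : Fin n × Fin N, c p.1 * c q.1 * φ (‖Y p - Y q‖) := by
      rw [← Equiv.sum_comp (finProdFinEquiv : Fin n × Fin N ≃ Fin (n*N))
        (fun p' : Fin (n*N) => ∑ q' : Fin (n*N), C p' * C q' * φ (‖X p' - X q'‖))]
      refine Finset.sum_congr rfl fun p _ => ?_
      rw [← Equiv.sum_comp (finProdFinEquiv : Fin n × Fin N ≃ Fin (n*N))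
        (fun q' : Fin (n*N) => C (finProdFinEquiv p) * C q' * φ (‖X (finProdFinEquiv p) - X q'‖))]
      refine Finset.sum_congr rfl fun q _ => ?_
      simp only [hXdef, hCdef, Equiv.symm_apply_apply]
    have hnorm : ∀ p q : Fin n × Fin N,
        ‖Y p - Y q‖ = |α p.1 + 2*π*((p.2:ℕ):ℝ) - (α q.1 + 2*π*((q.2:ℕ):ℝ))| := by
      intro p q
      have happ : (Y p - Y q) 0 = α p.1 + 2*π*((p.2:ℕ):ℝ) - (α q.1 + 2*π*((q.2:ℕ):ℝ)) := rfl
      calc ‖Y p - Y q‖ = √(∑ t : Fin 1, ‖(Y p - Y q) t‖^2) := EuclideanSpace.norm_eq _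
        _ = √(‖(Y p - Y q) 0‖^2) := by rw [Fin.sum_univ_one]
        _ = ‖(Y p - Y q) 0‖ := Real.sqrt_sq (norm_nonneg _)
        _ = |α p.1 + 2*π*((p.2:ℕ):ℝ) - (α q.1 + 2*π*((q.2:ℕ):ℝ))| := by
            rw [happ, Real.norm_eq_abs]
    have inner_eq : ∀ i j : Fin n,
        (∑ k : Fin N, ∑ l : Fin N, φ (‖Y (i,k) - Y (j,l)‖))
          = ((N:ℝ) - ((m i j).natAbs : ℝ)) * φ (θ i j) := by
      intro i j
      have hterm : ∀ k l : Fin N, φ (‖Y (i,k) - Y (j,l)‖)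
          = if (((k:ℕ):ℤ) - ((l:ℕ):ℤ) = m i j) then φ (θ i j) else 0 := by
        intro k l
        rw [hnorm (i,k) (j,l)]
        have hcast : α i + 2*π*((k:ℕ):ℝ) - (α j + 2*π*((l:ℕ):ℝ))
            = α i - α j + 2*π*(((((k:ℕ):ℤ) - ((l:ℕ):ℤ)) : ℤ) : ℝ) := by push_cast; ring
        rw [hcast]
        exact hm2 i j (((k:ℕ):ℤ) - ((l:ℕ):ℤ))
      rw [Finset.sum_congr rfl fun k _ => Finset.sum_congr rfl fun l _ => hterm k l]
      exact cnt_aux N hN (m i j) (hm1 i j) (φ (θ i j))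
    have hsum : (∑ p : Fin n × Fin N, ∑ q : Fin n × Fin N, c p.1 * c q.1 * φ (‖Y p - Y q‖))
        = ∑ i, ∑ j, c i * c j * (((N:ℝ) - ((m i j).natAbs : ℝ)) * φ (θ i j)) := by
      rw [Fintype.sum_prod_type]
      refine Finset.sum_congr rfl fun i _ => ?_
      calc (∑ k : Fin N, ∑ q : Fin n × Fin N, c i * c q.1 * φ (‖Y (i,k) - Y q‖))
          = ∑ k : Fin N, ∑ j, ∑ l, c i * c j * φ (‖Y (i,k) - Y (j,l)‖) := by
            exact Finset.sum_congr rfl fun k _ => Fintype.sum_prod_type _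
        _ = ∑ j, ∑ k : Fin N, ∑ l, c i * c j * φ (‖Y (i,k) - Y (j,l)‖) := Finset.sum_comm
        _ = ∑ j, c i * c j * ∑ k : Fin N, ∑ l, φ (‖Y (i,k) - Y (j,l)‖) := by
            refine Finset.sum_congr rfl fun j _ => ?_
            rw [Finset.mul_sum]
            exact Finset.sum_congr rfl fun k _ => by rw [← Finset.mul_sum]
        _ = ∑ j, c i * c j * (((N:ℝ) - ((m i j).natAbs : ℝ)) * φ (θ i j)) := by
            refine Finset.sum_congr rfl fun j _ => ?_
            rw [inner_eq i j]
    have hexp : (∑ i, ∑ j, c i * c j * (((N:ℝ) - ((m i j).natAbs : ℝ)) * φ (θ i j)))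
        = (N:ℝ) * S - B := by
      rw [hSdef, hBdef, Finset.mul_sum, ← Finset.sum_sub_distrib]
      refine Finset.sum_congr rfl fun i _ => ?_
      rw [Finset.mul_sum, ← Finset.sum_sub_distrib]
      exact Finset.sum_congr rfl fun j _ => by ring
    rw [hT2, hsum, hexp] at hT
    linarith
  by_contra hS
  push_neg at hS
  obtain ⟨N, hNgt⟩ := exists_nat_gt (max 1 (B / S))
  have hN1 : 1 ≤ N := by
    have : (1:ℝ) < N := lt_of_le_of_lt (le_max_left _ _) hNgt
    exact_mod_cast this.le
  have h2 := main N hN1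
  have h3 : B / S < N := lt_of_le_of_lt (le_max_right _ _) hNgt
  rw [div_lt_iff_of_neg hS] at h3
  linarith
end
end

section
/- For all real numbers τ > 0 and δ ∈ (0,1), the multiquadric function ψ defined by ψ(θ) = (1−δ)^{2τ} / (1 + δ^2 − 2δ cos θ)^τ for θ ∈ [0,π] belongs to the class Ψ_d^+ for every integer d ≥ 1; in other words, ψ belongs to the class Ψ_∞^+. -/
open scoped BigOperators

noncomputable section

namespace Stmt16

open Filter Finset


/-- generalized binomial coefficients for `(1-z)^{-τ}` -/
def mqa (τ : ℝ) (k : ℕ) : ℝ := (∏ m ∈ Finset.range k, (τ + m)) / (k.factorial : ℝ)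

lemma mqa_zero (τ : ℝ) : mqa τ 0 = 1 := by simp [mqa]

lemma mqa_pos {τ : ℝ} (hτ : 0 < τ) (k : ℕ) : 0 < mqa τ k := by
  apply div_pos
  · exact Finset.prod_pos fun m _ => by positivity
  · exact_mod_cast k.factorial_pos

lemma mqa_succ (τ : ℝ) (k : ℕ) : mqa τ (k + 1) * (k + 1) = mqa τ k * (τ + k) := by
  have hf : ((k.factorial : ℝ)) ≠ 0 := by exact_mod_cast k.factorial_pos.ne'
  simp only [mqa, Finset.prod_range_succ, Nat.factorial_succ]
  push_cast
  field_simp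

lemma tendsto_ratio (x y : ℝ) :
    Tendsto (fun k : ℕ => (x + k) / (y + k)) atTop (nhds 1) := by
  have h1 : Tendsto (fun k : ℕ => x / k + 1) atTop (nhds 1) := by
    simpa using (tendsto_const_div_atTop_nhds_zero_nat x).add tendsto_const_nhds
  have h2 : Tendsto (fun k : ℕ => y / k + 1) atTop (nhds 1) := by
    simpa using (tendsto_const_div_atTop_nhds_zero_nat y).add tendsto_const_nhds
  have h3 : Tendsto (fun k : ℕ => (x / k + 1) / (y / k + 1)) atTop (nhds 1) := by
    simpa [Pi.div_def] using h1.div h2 one_ne_zero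
  refine h3.congr' ?_
  filter_upwards [eventually_gt_atTop (⌈|y|⌉₊)] with k hk
  have hk0 : (0:ℝ) < k := by
    have : (0:ℕ) ≤ ⌈|y|⌉₊ := Nat.zero_le _
    exact_mod_cast Nat.lt_of_le_of_lt this hk
  have hyk : 0 < y + k := by
    have : |y| < k := by
      calc |y| ≤ ⌈|y|⌉₊ := Nat.le_ceil _
      _ < k := by exact_mod_cast hk
    linarith [neg_abs_le y]
  field_simp

lemma summable_mul_pow {p : ℕ → ℝ} (hp : ∀ k, 0 < p k)
    (hr : Tendsto (fun k => p (k + 1) / p k) atTop (nhds 1))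
    {r : ℝ} (h : |r| < 1) : Summable fun k => p k * r ^ k := by
  rcases eq_or_ne r 0 with rfl | hr0
  · apply summable_of_ne_finset_zero (s := {0})
    intro k hk
    simp only [Finset.mem_singleton] at hk
    simp [zero_pow hk]
  · apply summable_of_ratio_test_tendsto_lt_one h
    · exact Filter.Eventually.of_forall fun n =>
        mul_ne_zero (hp n).ne' (pow_ne_zero _ hr0)
    · have : (fun n => ‖p (n + 1) * r ^ (n + 1)‖ / ‖p n * r ^ n‖)
          = fun n => (p (n + 1) / p n) * |r| := by
        funext n
        rw [Real.norm_eq_abs, Real.norm_eq_abs, abs_mul, abs_mul, abs_pow, abs_pow,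
          abs_of_pos (hp (n+1)), abs_of_pos (hp n), pow_succ]
        have h1 : p n ≠ 0 := (hp n).ne'
        have h2 : |r| ^ n ≠ 0 := pow_ne_zero _ (abs_ne_zero.2 hr0)
        field_simp
      rw [this]
      simpa using hr.mul_const |r|


lemma mqa_ratio {τ : ℝ} (hτ : 0 < τ) :
    Tendsto (fun k : ℕ => mqa τ (k + 1) / mqa τ k) atTop (nhds 1) := by
  have heq : (fun k : ℕ => mqa τ (k + 1) / mqa τ k) = fun k : ℕ => (τ + k) / (1 + k) := by
    funext k
    have h := mqa_succ τ k
    have ha : mqa τ k ≠ 0 := (mqa_pos hτ k).ne'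
    have hk : (1:ℝ) + k ≠ 0 := by positivity
    field_simp
    linear_combination h
  rw [heq]; exact tendsto_ratio τ 1

lemma summable_A {τ : ℝ} (hτ : 0 < τ) {r : ℝ} (h : |r| < 1) :
    Summable fun k => mqa τ k * r ^ k :=
  summable_mul_pow (mqa_pos hτ) (mqa_ratio hτ) h

lemma summable_B {τ : ℝ} (hτ : 0 < τ) {r : ℝ} (h : |r| < 1) :
    Summable fun k : ℕ => ((k : ℝ) + 1) * mqa τ (k + 1) * r ^ k := by
  apply summable_mul_pow (p := fun k : ℕ => ((k : ℝ) + 1) * mqa τ (k + 1))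
  · intro k; have := mqa_pos hτ (k + 1); positivity
  · refine (tendsto_ratio (τ + 1) 1).congr fun k => ?_
    have h := mqa_succ τ (k + 1)
    push_cast at h ⊢
    have ha : mqa τ (k + 1) ≠ 0 := (mqa_pos hτ (k + 1)).ne'
    have hk : (1:ℝ) + k ≠ 0 := by positivity
    have hk1 : ((k:ℝ) + 1) ≠ 0 := by positivity
    field_simp
    linear_combination (-( (k:ℝ) + 1)) * h
  · exact h

/-- `F(r) = Σ aₖ rᵏ`. -/
def mqF (τ : ℝ) (r : ℝ) : ℝ := ∑' k, mqa τ k * r ^ k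

lemma mqF_zero {τ : ℝ} : mqF τ 0 = 1 := by
  have : ∑' k, mqa τ k * (0:ℝ) ^ k = mqa τ 0 * (0:ℝ) ^ 0 :=
    tsum_eq_single 0 (fun k hk => by simp [zero_pow hk])
  simp [mqF, this, mqa_zero]


lemma summable_deriv_bound {τ : ℝ} (hτ : 0 < τ) {ρ : ℝ} (hρ0 : 0 ≤ ρ) (hρ : ρ < 1) :
    Summable fun k : ℕ => mqa τ k * ((k : ℝ) * ρ ^ (k - 1)) := by
  rw [← summable_nat_add_iff 1]
  rw [show (fun k : ℕ => mqa τ (k + 1) * ((↑(k + 1) : ℝ) * ρ ^ (k + 1 - 1)))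
      = fun k : ℕ => ((k : ℝ) + 1) * mqa τ (k + 1) * ρ ^ k by
    funext k; push_cast [Nat.add_sub_cancel]; ring]
  exact summable_B hτ (by rwa [abs_of_nonneg hρ0])

lemma summable_deriv {τ : ℝ} (hτ : 0 < τ) {z : ℝ} (hz : |z| < 1) :
    Summable fun k : ℕ => mqa τ k * ((k : ℝ) * z ^ (k - 1)) := by
  apply Summable.of_norm_bounded (summable_deriv_bound hτ (abs_nonneg z) hz)
  intro k
  rw [Real.norm_eq_abs, abs_mul, abs_mul, abs_of_pos (mqa_pos hτ k), abs_pow,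
    Nat.abs_cast]

lemma hasDerivAt_mqF {τ : ℝ} (hτ : 0 < τ) {z : ℝ} (hz : |z| < 1) :
    HasDerivAt (mqF τ) (∑' k : ℕ, mqa τ k * ((k : ℝ) * z ^ (k - 1))) z := by
  set ρ : ℝ := (|z| + 1) / 2 with hρdef
  have hρ0 : 0 ≤ ρ := by positivity
  have hρ1 : ρ < 1 := by rw [hρdef]; linarith
  have hzρ : |z| < ρ := by rw [hρdef]; linarith
  have hu : Summable fun k : ℕ => mqa τ k * ((k : ℝ) * ρ ^ (k - 1)) :=
    summable_deriv_bound hτ hρ0 hρ1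
  exact hasDerivAt_tsum_of_isPreconnected hu (isOpen_Ioo (a := -ρ) (b := ρ))
    (convex_Ioo _ _).isPreconnected
    (fun k y _ => (hasDerivAt_pow k y).const_mul (mqa τ k))
    (fun k y hy => by
      rw [Real.norm_eq_abs, abs_mul, abs_mul, abs_of_pos (mqa_pos hτ k), abs_pow,
        Nat.abs_cast]
      have hyρ : |y| ≤ ρ := le_of_lt (abs_lt.2 ⟨hy.1, hy.2⟩)
      have : |y| ^ (k - 1) ≤ ρ ^ (k - 1) := pow_le_pow_left₀ (abs_nonneg y) hyρ _
      have hmk : (0:ℝ) ≤ (k:ℝ) := Nat.cast_nonneg k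
      have := mqa_pos hτ k
      gcongr)
    ⟨(abs_lt.1 hzρ).1, (abs_lt.1 hzρ).2⟩
    (summable_A hτ hz) ⟨(abs_lt.1 hzρ).1, (abs_lt.1 hzρ).2⟩

lemma ode {τ : ℝ} (hτ : 0 < τ) {z : ℝ} (hz : |z| < 1) :
    (1 - z) * (∑' k : ℕ, mqa τ k * ((k : ℝ) * z ^ (k - 1))) = τ * mqF τ z := by
  have hD : Summable fun k : ℕ => mqa τ k * ((k : ℝ) * z ^ (k - 1)) := summable_deriv hτ hz
  have hA : Summable fun k : ℕ => mqa τ k * z ^ k := summable_A hτ hz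
  -- W k = k * mqa k * z ^ k
  have hW : Summable fun k : ℕ => (k : ℝ) * mqa τ k * z ^ k := by
    rw [← summable_nat_add_iff 1]
    rw [show (fun k : ℕ => ((↑(k + 1) : ℝ)) * mqa τ (k + 1) * z ^ (k + 1))
        = fun k : ℕ => z * (((k : ℝ) + 1) * mqa τ (k + 1) * z ^ k) by
      funext k; push_cast; ring]
    exact (summable_B hτ hz).mul_left z
  set S1 : ℝ := ∑' k : ℕ, mqa τ k * ((k : ℝ) * z ^ (k - 1)) with hS1
  -- S1 = τ * F + ∑' W
  have key1 : S1 = τ * mqF τ z + ∑' k : ℕ, (k : ℝ) * mqa τ k * z ^ k := by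
    rw [hS1, hD.tsum_eq_zero_add]
    have : (fun k : ℕ => mqa τ (k + 1) * ((↑(k + 1) : ℝ) * z ^ (k + 1 - 1)))
        = fun k : ℕ => τ * (mqa τ k * z ^ k) + ((k : ℝ) * mqa τ k * z ^ k) := by
      funext k
      have h := mqa_succ τ k
      simp only [Nat.add_sub_cancel]
      push_cast
      linear_combination z ^ k * h
    rw [this, Summable.tsum_add (hA.mul_left τ) hW, tsum_mul_left]
    simp [mqF]
  -- z * S1 = ∑' W
  have key2 : z * S1 = ∑' k : ℕ, (k : ℝ) * mqa τ k * z ^ k := by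
    rw [hS1, ← tsum_mul_left]
    refine tsum_congr fun k => ?_
    cases k with
    | zero => simp
    | succ m => simp only [Nat.add_sub_cancel]; push_cast; ring
  rw [← key2] at key1
  linear_combination key1


lemma mqF_mul_rpow {τ : ℝ} (hτ : 0 < τ) {z : ℝ} (hz : |z| < 1) :
    mqF τ z * (1 - z) ^ τ = 1 := by
  set G : ℝ → ℝ := fun y => mqF τ y * (1 - y) ^ τ with hGdef
  have hG : ∀ y ∈ Set.Ioo (-1 : ℝ) 1, HasDerivAt G 0 y := by
    intro y hy
    have hy' : |y| < 1 := abs_lt.2 ⟨hy.1, hy.2⟩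
    have hx : (0:ℝ) < 1 - y := by have := hy.2; linarith
    have hd1 := hasDerivAt_mqF hτ hy'
    have hd2 : HasDerivAt (fun y : ℝ => (1 - y) ^ τ) (-1 * τ * (1 - y) ^ (τ - 1)) y := by
      have hid : HasDerivAt (fun y : ℝ => 1 - y) (-1) y := by
        simpa using (hasDerivAt_id y).const_sub 1
      exact hid.rpow_const (Or.inl hx.ne')
    have := hd1.mul hd2
    refine this.congr_deriv (Eq.symm ?_)
    have e1 : (1 - y) ^ τ = (1 - y) ^ (τ - 1) * (1 - y) := by
      rw [Real.rpow_sub_one hx.ne']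
      field_simp
    rw [e1]
    have key := ode hτ hy'
    linear_combination (-(1 - y) ^ (τ - 1)) * key
  have hmem : z ∈ Set.Ioo (-1 : ℝ) 1 := ⟨(abs_lt.1 hz).1, (abs_lt.1 hz).2⟩
  have hG0 : G 0 = 1 := by
    simp [hGdef, mqF_zero, Real.one_rpow]
  rcases le_or_gt 0 z with h0 | h0
  · have hsub : Set.Icc (0:ℝ) z ⊆ Set.Ioo (-1 : ℝ) 1 := fun y hy =>
      ⟨by linarith [hy.1], lt_of_le_of_lt hy.2 hmem.2⟩
    have := constant_of_has_deriv_right_zero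
      (f := G) (a := 0) (b := z)
      (fun y hy => (hG y (hsub hy)).continuousAt.continuousWithinAt)
      (fun y hy => (hG y (hsub (Set.mem_Icc.2 ⟨hy.1, le_of_lt hy.2⟩))).hasDerivWithinAt)
      z ⟨h0, le_refl z⟩
    show G z = 1
    rw [this, hG0]
  · have hsub : Set.Icc z (0:ℝ) ⊆ Set.Ioo (-1 : ℝ) 1 := fun y hy =>
      ⟨lt_of_lt_of_le hmem.1 hy.1, by linarith [hy.2]⟩
    have := constant_of_has_deriv_right_zero
      (f := G) (a := z) (b := 0)
      (fun y hy => (hG y (hsub hy)).continuousAt.continuousWithinAt)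
      (fun y hy => (hG y (hsub (Set.mem_Icc.2 ⟨hy.1, le_of_lt hy.2⟩))).hasDerivWithinAt)
      0 ⟨le_of_lt h0, le_refl 0⟩
    show G z = 1
    rw [← this, hG0]

lemma hasSum_binom {τ : ℝ} (hτ : 0 < τ) {z : ℝ} (hz : |z| < 1) :
    HasSum (fun k : ℕ => mqa τ k * z ^ k) (((1 - z) ^ τ)⁻¹) := by
  have hA := summable_A hτ hz
  have : mqF τ z = ((1 - z) ^ τ)⁻¹ :=
    eq_inv_of_mul_eq_one_right (by rw [mul_comm]; exact mqF_mul_rpow hτ hz)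
  rw [← this]
  exact hA.hasSum


lemma expand {d n : ℕ} (k : ℕ) (x : Fin n → (Fin (d + 1) → ℝ)) (c : Fin n → ℝ) :
    ∑ i, ∑ j, c i * c j * (∑ t, x i t * x j t) ^ k
      = ∑ α : Fin k → Fin (d + 1), (∑ i, c i * ∏ m, x i (α m)) ^ 2 := by
  have hpow : ∀ i j : Fin n, (∑ t, x i t * x j t) ^ k
      = ∑ α : Fin k → Fin (d + 1), (∏ m, x i (α m)) * ∏ m, x j (α m) := by
    intro i j
    rw [Finset.sum_pow' Finset.univ (fun t => x i t * x j t) k, Fintype.piFinset_univ]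
    exact Finset.sum_congr rfl fun α _ => by rw [← Finset.prod_mul_distrib]
  have hr : ∀ α : Fin k → Fin (d + 1), (∑ i, c i * ∏ m, x i (α m)) ^ 2
      = ∑ i, ∑ j, (c i * ∏ m, x i (α m)) * (c j * ∏ m, x j (α m)) := fun α => by
    rw [sq, Finset.sum_mul_sum]
  simp_rw [hpow, Finset.mul_sum, hr]
  calc ∑ i, ∑ j, ∑ α : Fin k → Fin (d + 1),
        c i * c j * ((∏ m, x i (α m)) * ∏ m, x j (α m))
      = ∑ i, ∑ α : Fin k → Fin (d + 1), ∑ j,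
          c i * c j * ((∏ m, x i (α m)) * ∏ m, x j (α m)) :=
        Finset.sum_congr rfl fun i _ => Finset.sum_comm
    _ = ∑ α : Fin k → Fin (d + 1), ∑ i, ∑ j,
          c i * c j * ((∏ m, x i (α m)) * ∏ m, x j (α m)) := Finset.sum_comm
    _ = ∑ α : Fin k → Fin (d + 1), ∑ i, ∑ j,
          (c i * ∏ m, x i (α m)) * (c j * ∏ m, x j (α m)) :=
        Finset.sum_congr rfl fun α _ => Finset.sum_congr rfl fun i _ =>
          Finset.sum_congr rfl fun j _ => by ring

lemma vanish {n : ℕ} {w c : Fin n → ℝ} (j0 : Fin n) (hw1 : w j0 = 1)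
    (hwlt : ∀ i, i ≠ j0 → w i < 1)
    (h : ∀ k : ℕ, ∑ i, c i * w i ^ k = 0) : c j0 = 0 := by
  classical
  set q : Polynomial ℝ := ∏ i ∈ Finset.univ.erase j0, (Polynomial.X - Polynomial.C (w i))
    with hq
  have hsum : ∑ i, c i * q.eval (w i) = 0 := by
    have heval : ∀ t : ℝ, q.eval t
        = ∑ m ∈ Finset.range (q.natDegree + 1), q.coeff m * t ^ m := fun t => by
      rw [Polynomial.eval_eq_sum_range]
    simp_rw [heval, Finset.mul_sum]
    rw [Finset.sum_comm]
    refine Finset.sum_eq_zero fun m _ => ?_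
    have : ∑ i, c i * (q.coeff m * w i ^ m) = q.coeff m * ∑ i, c i * w i ^ m := by
      rw [Finset.mul_sum]
      exact Finset.sum_congr rfl fun i _ => by ring
    rw [this, h m, mul_zero]
  have hvan : ∀ i, i ≠ j0 → q.eval (w i) = 0 := by
    intro i hi
    rw [hq, Polynomial.eval_prod]
    exact Finset.prod_eq_zero (Finset.mem_erase.2 ⟨hi, Finset.mem_univ i⟩) (by simp)
  have hone : q.eval (w j0) = ∏ i ∈ Finset.univ.erase j0, (1 - w i) := by
    rw [hq, Polynomial.eval_prod, hw1]
    exact Finset.prod_congr rfl fun i _ => by simp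
  have hpos : 0 < ∏ i ∈ Finset.univ.erase j0, (1 - w i) :=
    Finset.prod_pos fun i hi => by
      have := hwlt i (Finset.mem_erase.1 hi).1
      linarith
  have : ∑ i, c i * q.eval (w i) = c j0 * q.eval (w j0) :=
    Finset.sum_eq_single j0 (fun i _ hi => by rw [hvan i hi, mul_zero]) (by simp)
  rw [this, hone] at hsum
  exact (mul_eq_zero.1 hsum).resolve_right hpos.ne'


lemma expand_single {d n : ℕ} (k : ℕ) (x : Fin n → (Fin (d + 1) → ℝ))
    (y : Fin (d + 1) → ℝ) (c : Fin n → ℝ) :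
    ∑ i, c i * (∑ t, x i t * y t) ^ k
      = ∑ α : Fin k → Fin (d + 1), (∑ i, c i * ∏ m, x i (α m)) * ∏ m, y (α m) := by
  have hpow : ∀ i : Fin n, (∑ t, x i t * y t) ^ k
      = ∑ α : Fin k → Fin (d + 1), (∏ m, x i (α m)) * ∏ m, y (α m) := by
    intro i
    rw [Finset.sum_pow' Finset.univ (fun t => x i t * y t) k, Fintype.piFinset_univ]
    exact Finset.sum_congr rfl fun α _ => by rw [← Finset.prod_mul_distrib]
  simp_rw [hpow, Finset.mul_sum]
  rw [Finset.sum_comm]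
  refine Finset.sum_congr rfl fun α _ => ?_
  rw [Finset.sum_mul]
  exact Finset.sum_congr rfl fun i _ => by ring

lemma inner_coord {d n : ℕ} (x : Fin n → EuclideanSpace ℝ (Fin (d + 1))) (i j : Fin n) :
    (inner ℝ (x i) (x j) : ℝ) = ∑ t, x i t * x j t := by
  simp [PiLp.inner_apply, RCLike.inner_apply, conj_trivial, mul_comm]

lemma strict_pd {τ u : ℝ} (hτ : 0 < τ) (hu0 : 0 < u) (hu1 : u < 1)
    {d n : ℕ} (x : Fin n → EuclideanSpace ℝ (Fin (d + 1)))
    (hx : ∀ i, ‖x i‖ = 1) (hinj : Function.Injective x)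
    (c : Fin n → ℝ) (hc : c ≠ 0) :
    0 < ∑ i, ∑ j, c i * c j * (((1 - u * (inner ℝ (x i) (x j) : ℝ)) ^ τ)⁻¹) := by
  classical
  set s : Fin n → Fin n → ℝ := fun i j => (inner ℝ (x i) (x j) : ℝ) with hs
  have habs : ∀ i j, |s i j| ≤ 1 := fun i j => by
    have := abs_real_inner_le_norm (x i) (x j)
    rw [hx i, hx j, one_mul] at this
    exact this
  have husz : ∀ i j, |u * s i j| < 1 := fun i j => by
    rw [abs_mul, abs_of_pos hu0]
    calc u * |s i j| ≤ u * 1 := mul_le_mul_of_nonneg_left (habs i j) hu0.le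
      _ < 1 := by rw [mul_one]; exact hu1
  have hpair : ∀ i j, HasSum (fun k : ℕ => c i * c j * (mqa τ k * (u * s i j) ^ k))
      (c i * c j * ((1 - u * s i j) ^ τ)⁻¹) := fun i j =>
    (hasSum_binom hτ (husz i j)).mul_left _
  have htot : HasSum (fun k : ℕ => ∑ i, ∑ j, c i * c j * (mqa τ k * (u * s i j) ^ k))
      (∑ i, ∑ j, c i * c j * ((1 - u * s i j) ^ τ)⁻¹) :=
    hasSum_sum fun i _ => hasSum_sum fun j _ => hpair i j
  -- rewrite each coefficient via the monomial expansion
  have hterm : ∀ k : ℕ, (∑ i, ∑ j, c i * c j * (mqa τ k * (u * s i j) ^ k))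
      = mqa τ k * u ^ k *
        ∑ α : Fin k → Fin (d + 1), (∑ i, c i * ∏ m, x i (α m)) ^ 2 := by
    intro k
    rw [← expand k (fun i => (x i : Fin (d + 1) → ℝ)) c]
    rw [Finset.mul_sum]
    refine Finset.sum_congr rfl fun i _ => ?_
    rw [Finset.mul_sum]
    refine Finset.sum_congr rfl fun j _ => ?_
    simp only [hs]
    rw [inner_coord x i j, mul_pow]
    ring
  have hnonneg : ∀ k : ℕ, 0 ≤ ∑ i, ∑ j, c i * c j * (mqa τ k * (u * s i j) ^ k) := by
    intro k
    rw [hterm k]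
    have h1 := mqa_pos hτ k
    have h2 : (0:ℝ) < u ^ k := pow_pos hu0 k
    have h3 : (0:ℝ) ≤ ∑ α : Fin k → Fin (d + 1), (∑ i, c i * ∏ m, x i (α m)) ^ 2 :=
      Finset.sum_nonneg fun α _ => sq_nonneg _
    positivity
  -- there is a strictly positive term
  have hexists : ∃ k : ℕ, 0 < ∑ i, ∑ j, c i * c j * (mqa τ k * (u * s i j) ^ k) := by
    by_contra hcon
    push_neg at hcon
    have hzero : ∀ k : ℕ, ∀ α : Fin k → Fin (d + 1), (∑ i, c i * ∏ m, x i (α m)) = 0 := by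
      intro k α
      have h0 : (∑ α : Fin k → Fin (d + 1), (∑ i, c i * ∏ m, x i (α m)) ^ 2) = 0 := by
        have := le_antisymm (hcon k) (hnonneg k)
        rw [hterm k] at this
        have h1 := (mqa_pos hτ k).ne'
        have h2 := (pow_pos hu0 k).ne'
        have := mul_eq_zero.1 this
        rcases this with h | h
        · rcases mul_eq_zero.1 h with h' | h'
          · exact absurd h' h1
          · exact absurd h' h2
        · exact h
      have := (Finset.sum_eq_zero_iff_of_nonneg fun α _ => sq_nonneg _).1 h0 α
        (Finset.mem_univ α)
      exact pow_eq_zero_iff two_ne_zero |>.1 this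
    have hcj : ∀ j0 : Fin n, c j0 = 0 := by
      intro j0
      refine vanish j0 (w := fun i => s i j0) ?_ ?_ ?_
      · rw [hs]
        have := real_inner_self_eq_norm_sq (x j0)
        rw [hx j0] at this
        simpa using this
      · intro i hi
        exact (inner_lt_one_iff_real_of_norm_eq_one (hx i) (hx j0)).2
          fun he => hi (hinj he)
      · intro k
        have : ∀ i, s i j0 = ∑ t, x i t * x j0 t := fun i => inner_coord x i j0
        simp_rw [this]
        rw [expand_single k (fun i => (x i : Fin (d + 1) → ℝ)) (x j0) c]
        refine Finset.sum_eq_zero fun α _ => ?_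
        rw [hzero k α, zero_mul]
    exact hc (funext hcj)
  obtain ⟨k0, hk0⟩ := hexists
  rw [← htot.tsum_eq]
  exact Summable.tsum_pos htot.summable hnonneg k0 hk0

end Stmt16

open Filter Finset Stmt16 in
/-- the multiquadric family belongs to `Ψ_d^+` for every `d ≥ 1`,
i.e. to `Ψ_∞^+`. -/
theorem stmt_16 (τ δ : ℝ) (hτ : 0 < τ) (hδ : δ ∈ Set.Ioo (0:ℝ) 1) :
    ∀ d : ℕ, 1 ≤ d → memPsiPlus d
      (fun θ => (1 - δ) ^ (2 * τ) / (1 + δ ^ 2 - 2 * δ * Real.cos θ) ^ τ) := by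
  obtain ⟨hδ0, hδ1⟩ := hδ
  have h1δ : 0 < 1 - δ := by linarith
  have hdpos : (0:ℝ) < 1 + δ ^ 2 := by positivity
  have hden : ∀ θ : ℝ, 0 < 1 + δ ^ 2 - 2 * δ * Real.cos θ := by
    intro θ
    have h := mul_le_mul_of_nonneg_left (Real.cos_le_one θ) hδ0.le
    nlinarith [sq_nonneg (1 - δ)]
  intro d _hd
  refine ⟨?_, ?_, ?_⟩
  · -- continuity
    apply Continuous.continuousOn
    apply Continuous.div continuous_const
    · exact (continuous_const.sub (continuous_const.mul Real.continuous_cos)).rpow_const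
        fun θ => Or.inl (hden θ).ne'
    · exact fun θ => (Real.rpow_pos_of_pos (hden θ) τ).ne'
  · -- value at 0
    have h2 : 1 + δ ^ 2 - 2 * δ * Real.cos 0 = (1 - δ) ^ (2:ℕ) := by
      rw [Real.cos_zero]; ring
    simp only [h2]
    rw [← Real.rpow_natCast (1 - δ) 2, ← Real.rpow_mul h1δ.le]
    norm_num
    exact (Real.rpow_pos_of_pos h1δ _).ne'
  · -- strict positive definiteness
    intro n x hx hinj c hc
    set u : ℝ := 2 * δ / (1 + δ ^ 2) with hu
    have hu0 : 0 < u := by positivity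
    have hu1 : u < 1 := by
      rw [hu, div_lt_one hdpos]
      nlinarith [sq_nonneg (1 - δ)]
    set C : ℝ := (1 - δ) ^ (2 * τ) / (1 + δ ^ 2) ^ τ with hC
    have hCpos : 0 < C :=
      div_pos (Real.rpow_pos_of_pos h1δ _) (Real.rpow_pos_of_pos hdpos _)
    have key := strict_pd hτ hu0 hu1 x hx hinj c hc
    have hre : ∀ i j : Fin n,
        (1 - δ) ^ (2 * τ) /
            (1 + δ ^ 2 - 2 * δ * Real.cos (Real.arccos ((inner ℝ (x i) (x j) : ℝ)))) ^ τ
          = C * ((1 - u * ((inner ℝ (x i) (x j) : ℝ))) ^ τ)⁻¹ := by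
      intro i j
      set sij : ℝ := (inner ℝ (x i) (x j) : ℝ) with hsij
      have habs : |sij| ≤ 1 := by
        have := abs_real_inner_le_norm (x i) (x j)
        rw [hx i, hx j, one_mul] at this
        exact this
      have hcos : Real.cos (Real.arccos sij) = sij :=
        Real.cos_arccos (neg_le_of_abs_le habs) (le_of_abs_le habs)
      have hus : 0 < 1 - u * sij := by
        have h1 : |u * sij| < 1 := by
          rw [abs_mul, abs_of_pos hu0]
          calc u * |sij| ≤ u * 1 := mul_le_mul_of_nonneg_left habs hu0.le
            _ < 1 := by rw [mul_one]; exact hu1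
        have := (abs_lt.1 h1).2
        linarith
      have hfac : 1 + δ ^ 2 - 2 * δ * Real.cos (Real.arccos sij)
          = (1 + δ ^ 2) * (1 - u * sij) := by
        rw [hcos, hu]
        field_simp
      rw [hfac, Real.mul_rpow hdpos.le hus.le, div_mul_eq_div_div, div_eq_mul_inv, hC]
    calc (0:ℝ) < C * ∑ i, ∑ j, c i * c j * (((1 - u * ((inner ℝ (x i) (x j) : ℝ))) ^ τ)⁻¹) :=
          mul_pos hCpos key
      _ = ∑ i, ∑ j, c i * c j *
            ((1 - δ) ^ (2 * τ) /
              (1 + δ ^ 2 - 2 * δ * Real.cos (Real.arccos ((inner ℝ (x i) (x j) : ℝ)))) ^ τ) := by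
          rw [Finset.mul_sum]
          refine Finset.sum_congr rfl fun i _ => ?_
          rw [Finset.mul_sum]
          refine Finset.sum_congr rfl fun j _ => ?_
          rw [hre i j]
          ring
end
end

section
/- For every real number α ∈ (0,2), the sine power function ψ defined by ψ(θ) = 1 − (sin(θ/2))^α for θ ∈ [0,π] belongs to the class Ψ_d^+ for every integer d ≥ 1; in other words, ψ belongs to the class Ψ_∞^+. -/
open scoped BigOperators

noncomputable section

section SPFAUX
open MeasureTheory Set Real
noncomputable section


variable {β : ℝ}

/-- Continuity of the integrand on `Ioi 0`. -/
lemma spf_contOn (r : ℝ) (β : ℝ) :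
    ContinuousOn (fun t : ℝ => (1 - Real.exp (-(r * t))) * t ^ (-1 - β)) (Ioi 0) := by
  apply ContinuousOn.mul
  · exact (continuous_const.sub ((Real.continuous_exp.comp
      (continuous_const.mul continuous_id).neg))).continuousOn
  · exact fun x hx => (Real.continuousAt_rpow_const x _ (Or.inl (ne_of_gt hx))).continuousWithinAt

lemma spf_integrable (hβ0 : 0 < β) (hβ1 : β < 1) {r : ℝ} (hr : 0 ≤ r) :
    IntegrableOn (fun t : ℝ => (1 - Real.exp (-(r * t))) * t ^ (-1 - β)) (Ioi 0) := by
  have hmeas : ∀ s : Set ℝ, s ⊆ Ioi 0 → MeasurableSet s →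
      AEStronglyMeasurable (fun t : ℝ => (1 - Real.exp (-(r * t))) * t ^ (-1 - β))
        (volume.restrict s) := fun s hs hsm =>
    ((spf_contOn r β).mono hs).aestronglyMeasurable hsm
  have h1 : IntegrableOn (fun t : ℝ => (1 - Real.exp (-(r * t))) * t ^ (-1 - β)) (Ioc 0 1) := by
    have hint : IntegrableOn (fun t : ℝ => r * t ^ (-β)) (Ioc 0 1) := by
      have : IntervalIntegrable (fun x : ℝ => x ^ (-β)) volume 0 1 :=
        intervalIntegral.intervalIntegrable_rpow' (by linarith)
      exact ((intervalIntegrable_iff_integrableOn_Ioc_of_le zero_le_one).mp this).const_mul r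
    refine MeasureTheory.Integrable.mono hint (hmeas _ Ioc_subset_Ioi_self measurableSet_Ioc) ?_
    filter_upwards [ae_restrict_mem measurableSet_Ioc] with t ht
    have ht0 : 0 < t := ht.1
    have h1 : 0 ≤ 1 - Real.exp (-(r * t)) := by
      have : Real.exp (-(r * t)) ≤ 1 := by
        rw [Real.exp_le_one_iff]; exact neg_nonpos.mpr (mul_nonneg hr ht0.le)
      linarith
    have h2 : 1 - Real.exp (-(r * t)) ≤ r * t := by
      have := Real.add_one_le_exp (-(r * t)); linarith
    have h3 : (0:ℝ) ≤ t ^ (-1 - β) := Real.rpow_nonneg ht0.le _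
    rw [Real.norm_eq_abs, Real.norm_eq_abs, abs_of_nonneg (by positivity : (0:ℝ) ≤ r * t ^ (-β)),
      abs_of_nonneg (mul_nonneg h1 h3)]
    calc (1 - Real.exp (-(r * t))) * t ^ (-1 - β) ≤ (r * t) * t ^ (-1 - β) := by
          exact mul_le_mul_of_nonneg_right h2 h3
      _ = r * t ^ (-β) := by
          rw [mul_assoc]
          congr 1
          have : t * t ^ (-1 - β) = t ^ (1 + (-1 - β)) := by
            rw [Real.rpow_add ht0, Real.rpow_one]
          rw [this]
          congr 1
          ring
  have h2 : IntegrableOn (fun t : ℝ => (1 - Real.exp (-(r * t))) * t ^ (-1 - β)) (Ioi 1) := by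
    have hint : IntegrableOn (fun t : ℝ => t ^ (-1 - β)) (Ioi 1) :=
      integrableOn_Ioi_rpow_of_lt (by linarith) one_pos
    refine MeasureTheory.Integrable.mono hint (hmeas _ (fun x hx => Set.mem_Ioi.mpr (lt_trans one_pos (Set.mem_Ioi.mp hx))) measurableSet_Ioi) ?_
    filter_upwards [ae_restrict_mem measurableSet_Ioi] with t ht
    have ht0 : (0:ℝ) < t := lt_trans one_pos ht
    have h1 : 0 ≤ 1 - Real.exp (-(r * t)) := by
      have : Real.exp (-(r * t)) ≤ 1 := by
        rw [Real.exp_le_one_iff]; exact neg_nonpos.mpr (mul_nonneg hr ht0.le)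
      linarith
    have h2' : 1 - Real.exp (-(r * t)) ≤ 1 := by
      have := Real.exp_pos (-(r * t)); linarith
    have h3 : (0:ℝ) ≤ t ^ (-1 - β) := Real.rpow_nonneg ht0.le _
    rw [Real.norm_eq_abs, Real.norm_eq_abs, abs_of_nonneg h3,
      abs_of_nonneg (mul_nonneg h1 h3)]
    nlinarith
  have : Ioc (0:ℝ) 1 ∪ Ioi 1 = Ioi 0 := Ioc_union_Ioi_eq_Ioi zero_le_one
  rw [← this]
  exact h1.union h2


/-- The normalizing constant. -/
def spfJ (β : ℝ) : ℝ := ∫ t in Ioi (0:ℝ), (1 - Real.exp (-(1 * t))) * t ^ (-1 - β)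

lemma spfJ_pos (hβ0 : 0 < β) (hβ1 : β < 1) : 0 < spfJ β := by
  have hInt : IntegrableOn (fun t : ℝ => (1 - Real.exp (-(1 * t))) * t ^ (-1 - β)) (Ioi 0) :=
    spf_integrable hβ0 hβ1 zero_le_one
  have hnn : 0 ≤ᵐ[volume.restrict (Ioi (0:ℝ))]
      fun t : ℝ => (1 - Real.exp (-(1 * t))) * t ^ (-1 - β) := by
    filter_upwards [ae_restrict_mem measurableSet_Ioi] with t ht
    have h1 : Real.exp (-(1 * t)) < 1 := by
      rw [Real.exp_lt_one_iff]; simpa using ht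
    have h3 : (0:ℝ) ≤ t ^ (-1 - β) := Real.rpow_nonneg (le_of_lt ht) _
    have : (0:ℝ) ≤ 1 - Real.exp (-(1 * t)) := by linarith
    positivity
  have hIoc : IntervalIntegrable (fun t : ℝ => (1 - Real.exp (-(1 * t))) * t ^ (-1 - β))
      volume 1 2 := by
    rw [intervalIntegrable_iff_integrableOn_Ioc_of_le one_le_two]
    exact hInt.mono_set fun x hx => lt_trans one_pos hx.1
  have hpos12 : (0:ℝ) < ∫ t in (1:ℝ)..2, (1 - Real.exp (-(1 * t))) * t ^ (-1 - β) := by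
    refine intervalIntegral.intervalIntegral_pos_of_pos_on hIoc (fun x hx => ?_) one_lt_two
    have hx0 : (0:ℝ) < x := lt_trans one_pos hx.1
    have h1 : Real.exp (-(1 * x)) < 1 := by
      rw [Real.exp_lt_one_iff]; simpa using hx0
    have h3 : (0:ℝ) < x ^ (-1 - β) := Real.rpow_pos_of_pos hx0 _
    have : (0:ℝ) < 1 - Real.exp (-(1 * x)) := by linarith
    positivity
  have hle : (∫ t in Ioc (1:ℝ) 2, (1 - Real.exp (-(1 * t))) * t ^ (-1 - β))
      ≤ ∫ t in Ioi (0:ℝ), (1 - Real.exp (-(1 * t))) * t ^ (-1 - β) := by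
    refine setIntegral_mono_set hInt hnn ?_
    exact HasSubset.Subset.eventuallyLE fun x hx => lt_trans one_pos hx.1
  rw [intervalIntegral.integral_of_le one_le_two] at hpos12
  exact lt_of_lt_of_le hpos12 hle

lemma spf_scaling (hβ0 : 0 < β) (hβ1 : β < 1) {r : ℝ} (hr : 0 ≤ r) :
    ∫ t in Ioi (0:ℝ), (1 - Real.exp (-(r * t))) * t ^ (-1 - β) = r ^ β * spfJ β := by
  rcases eq_or_lt_of_le hr with hr0 | hr0
  · rw [← hr0]
    simp [Real.zero_rpow (ne_of_gt hβ0)]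
  · have key := MeasureTheory.integral_comp_mul_left_Ioi
      (fun u : ℝ => (1 - Real.exp (-u)) * u ^ (-1 - β)) 0 hr0
    rw [mul_zero] at key
    have congr1 : ∫ t in Ioi (0:ℝ), (1 - Real.exp (-(r * t))) * t ^ (-1 - β)
        = ∫ t in Ioi (0:ℝ), r ^ (1 + β) *
            ((1 - Real.exp (-(r * t))) * (r * t) ^ (-1 - β)) := by
      refine setIntegral_congr_fun measurableSet_Ioi fun t ht => ?_
      have ht0 : (0:ℝ) < t := ht
      rw [Real.mul_rpow hr0.le ht0.le]
      rw [show r ^ (1 + β) * ((1 - Real.exp (-(r * t))) * (r ^ (-1 - β) * t ^ (-1 - β)))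
        = (r ^ (1 + β) * r ^ (-1 - β)) * ((1 - Real.exp (-(r * t))) * t ^ (-1 - β)) by ring]
      rw [← Real.rpow_add hr0]
      norm_num
    rw [congr1, MeasureTheory.integral_const_mul, key, smul_eq_mul]
    have hspf : (∫ x in Ioi (0:ℝ), (fun u : ℝ => (1 - Real.exp (-u)) * u ^ (-1 - β)) x)
        = spfJ β := by
      unfold spfJ
      refine setIntegral_congr_fun measurableSet_Ioi fun t _ => ?_
      simp
    rw [hspf, ← Real.rpow_neg_one r, ← mul_assoc, ← Real.rpow_add hr0,
      show (1 + β) + (-1 : ℝ) = β by ring]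

lemma spf_repr (hβ0 : 0 < β) (hβ1 : β < 1) {r : ℝ} (hr : 0 ≤ r) :
    1 - r ^ β = (spfJ β)⁻¹ *
      ∫ t in Ioi (0:ℝ), (Real.exp (-(r * t)) - Real.exp (-t)) * t ^ (-1 - β) := by
  have h1 : IntegrableOn (fun t : ℝ => (1 - Real.exp (-(1 * t))) * t ^ (-1 - β)) (Ioi 0) :=
    spf_integrable hβ0 hβ1 zero_le_one
  have hr' : IntegrableOn (fun t : ℝ => (1 - Real.exp (-(r * t))) * t ^ (-1 - β)) (Ioi 0) :=
    spf_integrable hβ0 hβ1 hr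
  have congr2 : ∫ t in Ioi (0:ℝ), (Real.exp (-(r * t)) - Real.exp (-t)) * t ^ (-1 - β)
      = ∫ t in Ioi (0:ℝ), ((1 - Real.exp (-(1 * t))) * t ^ (-1 - β)
          - (1 - Real.exp (-(r * t))) * t ^ (-1 - β)) := by
    refine setIntegral_congr_fun measurableSet_Ioi fun t _ => ?_
    rw [one_mul]; ring
  rw [congr2, MeasureTheory.integral_sub h1 hr', spf_scaling hβ0 hβ1 hr]
  have hJ : spfJ β = 1 ^ β * spfJ β := by rw [Real.one_rpow, one_mul]
  rw [show (∫ t in Ioi (0:ℝ), (1 - Real.exp (-(1 * t))) * t ^ (-1 - β)) = spfJ β from rfl]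
  have hJpos := spfJ_pos hβ0 hβ1
  field_simp



end
end SPFAUX
section SPFAUX2
open Finset
noncomputable section
lemma spf_expand_pow {N k : ℕ} (z w : Fin N → ℝ) :
    (∑ a, z a * w a) ^ k
      = ∑ m : Fin k → Fin N, (∏ t, z (m t)) * (∏ t, w (m t)) := by
  have h : (∑ a, z a * w a) ^ k = ∏ _t : Fin k, (∑ a, z a * w a) := by
    rw [Finset.prod_const, Finset.card_univ, Fintype.card_fin]
  rw [h, Finset.prod_univ_sum]
  rw [Fintype.piFinset_univ]
  exact Finset.sum_congr rfl fun m _ => Finset.prod_mul_distrib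

lemma spf_sumsq {n N k : ℕ} (z : Fin n → Fin N → ℝ) (c : Fin n → ℝ) :
    ∑ i, ∑ j, c i * c j * (∑ a, z i a * z j a) ^ k
      = ∑ m : Fin k → Fin N, (∑ i, c i * ∏ t, z i (m t)) ^ 2 := by
  calc ∑ i, ∑ j, c i * c j * (∑ a, z i a * z j a) ^ k
      = ∑ i, ∑ j, ∑ m : Fin k → Fin N,
          (c i * ∏ t, z i (m t)) * (c j * ∏ t, z j (m t)) := by
        simp_rw [spf_expand_pow, Finset.mul_sum]
        exact sum_congr rfl fun i _ => sum_congr rfl fun j _ =>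
          sum_congr rfl fun m _ => by ring
    _ = ∑ i, ∑ m : Fin k → Fin N, ∑ j,
          (c i * ∏ t, z i (m t)) * (c j * ∏ t, z j (m t)) :=
        sum_congr rfl fun i _ => Finset.sum_comm
    _ = ∑ m : Fin k → Fin N, ∑ i, ∑ j,
          (c i * ∏ t, z i (m t)) * (c j * ∏ t, z j (m t)) := Finset.sum_comm
    _ = ∑ m : Fin k → Fin N, (∑ i, c i * ∏ t, z i (m t)) ^ 2 := by
        refine sum_congr rfl fun m _ => ?_
        rw [sq, Finset.sum_mul_sum]

lemma spf_sumsq_nonneg {n N k : ℕ} (z : Fin n → Fin N → ℝ) (c : Fin n → ℝ) :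
    0 ≤ ∑ i, ∑ j, c i * c j * (∑ a, z i a * z j a) ^ k := by
  rw [spf_sumsq]
  exact Finset.sum_nonneg fun m _ => sq_nonneg _


lemma spf_exists_pos {n N : ℕ} (z : Fin n → Fin N → ℝ) (hz : Function.Injective z)
    (hnorm : ∀ i, ∑ a, z i a * z i a = 2)
    (c : Fin n → ℝ) (hc : c ≠ 0) :
    ∃ k : ℕ, 1 ≤ k ∧ 0 < ∑ i, ∑ j, c i * c j * (∑ a, z i a * z j a) ^ k := by
  by_contra hcon
  push_neg at hcon
  have hzero : ∀ k : ℕ, 1 ≤ k → ∀ m : Fin k → Fin N,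
      ∑ i, c i * ∏ t, z i (m t) = 0 := by
    intro k hk m
    have hT := le_antisymm (hcon k hk) (spf_sumsq_nonneg (k := k) z c)
    rw [spf_sumsq] at hT
    have h0 := (Finset.sum_eq_zero_iff_of_nonneg
      (fun m _ => sq_nonneg _)).mp hT m (Finset.mem_univ m)
    exact (pow_eq_zero_iff (two_ne_zero)).mp h0
  have hpow : ∀ (w : Fin N → ℝ) (k : ℕ), 1 ≤ k →
      ∑ i, c i * (∑ a, z i a * w a) ^ k = 0 := by
    intro w k hk
    simp_rw [spf_expand_pow, Finset.mul_sum]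
    rw [Finset.sum_comm]
    refine Finset.sum_eq_zero fun m _ => ?_
    calc ∑ i, c i * ((∏ t, z i (m t)) * ∏ t, w (m t))
        = (∑ i, c i * ∏ t, z i (m t)) * ∏ t, w (m t) := by
          rw [Finset.sum_mul]
          exact Finset.sum_congr rfl fun i _ => by ring
      _ = 0 := by rw [hzero k hk m, zero_mul]
  have hexp : ∀ w : Fin N → ℝ,
      ∑ i, c i * Real.exp (∑ a, z i a * w a) = ∑ i, c i := by
    intro w
    have hsummable : ∀ i : Fin n,
        Summable (fun k : ℕ => c i * ((∑ a, z i a * w a) ^ k / ((Nat.factorial k : ℕ) : ℝ))) :=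
      fun i => (Real.summable_pow_div_factorial _).mul_left _
    have hexpi : ∀ i : Fin n, Real.exp (∑ a, z i a * w a)
        = ∑' k : ℕ, (∑ a, z i a * w a) ^ k / ((Nat.factorial k : ℕ) : ℝ) := fun i => by
      rw [Real.exp_eq_exp_ℝ, NormedSpace.exp_eq_tsum_div]
    calc ∑ i, c i * Real.exp (∑ a, z i a * w a)
        = ∑ i, ∑' k : ℕ, c i * ((∑ a, z i a * w a) ^ k / ((Nat.factorial k : ℕ) : ℝ)) := by
          refine Finset.sum_congr rfl fun i _ => ?_
          rw [hexpi i, tsum_mul_left]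
      _ = ∑' k : ℕ, ∑ i, c i * ((∑ a, z i a * w a) ^ k / ((Nat.factorial k : ℕ) : ℝ)) :=
          (Summable.tsum_finsetSum (fun i _ => hsummable i)).symm
      _ = ∑ i, c i := by
          rw [tsum_eq_single 0 ?_]
          · simp
          · intro k hk
            simp_rw [← mul_div_assoc]
            rw [← Finset.sum_div, hpow w k (Nat.one_le_iff_ne_zero.mpr hk), zero_div]
  classical
  set G := Multiplicative (Fin N → ℝ) with hG
  let χ : Fin n → (G →* ℝ) := fun i =>
    { toFun := fun w => Real.exp (∑ a, z i a * (Multiplicative.toAdd w) a)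
      map_one' := by simp
      map_mul' := fun u v => by
        show Real.exp (∑ a, z i a * (Multiplicative.toAdd u a + Multiplicative.toAdd v a))
          = Real.exp (∑ a, z i a * Multiplicative.toAdd u a)
            * Real.exp (∑ a, z i a * Multiplicative.toAdd v a)
        rw [← Real.exp_add, ← Finset.sum_add_distrib]
        congr 1
        exact Finset.sum_congr rfl fun a _ => by ring }
  have hval : ∀ i (v : Fin N → ℝ),
      χ i (Multiplicative.ofAdd v) = Real.exp (∑ a, z i a * v a) := fun i v => rfl
  have hne1 : ∀ i, χ i ≠ 1 := by
    intro i h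
    have h1 := congrArg (fun f : G →* ℝ => f (Multiplicative.ofAdd (z i))) h
    simp only [hval, MonoidHom.one_apply] at h1
    rw [hnorm i] at h1
    have h2 : (2:ℝ) = 0 := by
      have := Real.exp_zero
      exact Real.exp_injective (by rw [h1, Real.exp_zero])
    norm_num at h2
  have hinj2 : Function.Injective χ := by
    intro i j hij
    by_contra hne
    have hzne : z i ≠ z j := fun h => hne (hz h)
    have h1 := congrArg
      (fun f : G →* ℝ => f (Multiplicative.ofAdd (fun a => z i a - z j a))) hij
    simp only [hval] at h1
    have h2 : ∑ a, z i a * (z i a - z j a) = ∑ a, z j a * (z i a - z j a) :=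
      Real.exp_injective h1
    have h3 : ∑ a, (z i a - z j a) * (z i a - z j a) = 0 := by
      have he : ∀ a : Fin N, (z i a - z j a) * (z i a - z j a)
          = z i a * (z i a - z j a) - z j a * (z i a - z j a) := fun a => by ring
      simp_rw [he, Finset.sum_sub_distrib, h2, sub_self]
    have h4 : ∀ a, z i a - z j a = 0 := fun a =>
      mul_self_eq_zero.mp
        ((Finset.sum_eq_zero_iff_of_nonneg (fun a _ => mul_self_nonneg _)).mp h3 a
          (Finset.mem_univ a))
    exact hzne (funext fun a => sub_eq_zero.mp (h4 a))
  let v : Option (Fin n) → (G →* ℝ) := fun o => o.elim 1 χ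
  have hvinj : Function.Injective v := by
    intro o1 o2 h
    match o1, o2 with
    | none, none => rfl
    | none, some j => exact absurd h.symm (hne1 j)
    | some i, none => exact absurd h (hne1 i)
    | some i, some j => exact congrArg some (hinj2 h)
  have hLI := (linearIndependent_monoidHom G ℝ).comp v hvinj
  rw [Fintype.linearIndependent_iff] at hLI
  let g : Option (Fin n) → ℝ := fun o => o.elim (-(∑ i, c i)) c
  have hgsum : ∑ o : Option (Fin n), g o • ((fun f : G →* ℝ => (f : G → ℝ)) ∘ v) o = 0 := by
    funext w
    rw [Finset.sum_apply, Fintype.sum_option]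
    simp only [Function.comp_apply, Pi.smul_apply, smul_eq_mul, Pi.zero_apply]
    have hv0 : v none w = 1 := rfl
    have hvi : ∀ i : Fin n, v (some i) w
        = Real.exp (∑ a, z i a * (Multiplicative.toAdd w) a) := fun i => rfl
    simp only [hv0, hvi]
    have hg0 : g none = -(∑ i, c i) := rfl
    have hgi : ∀ i, g (some i) = c i := fun i => rfl
    simp only [hg0, hgi]
    rw [hexp (Multiplicative.toAdd w)]
    ring
  obtain ⟨i, hi⟩ := Function.ne_iff.mp hc
  exact hi (hLI g hgsum (some i))


lemma spf_K_pos {n N : ℕ} (z : Fin n → Fin N → ℝ) (c : Fin n → ℝ)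
    {k0 : ℕ} (hk0 : 1 ≤ k0)
    (hT : 0 < ∑ i, ∑ j, c i * c j * (∑ a, z i a * z j a) ^ k0)
    {u : ℝ} (hu : 0 < u) :
    (∑ i, c i) ^ 2 < ∑ i, ∑ j, c i * c j * Real.exp (u * ∑ a, z i a * z j a) := by
  set D : Fin n → Fin n → ℝ := fun i j => ∑ a, z i a * z j a with hD
  set T : ℕ → ℝ := fun k => ∑ i, ∑ j, c i * c j * (D i j) ^ k with hTdef
  set A : ℕ → ℝ := fun k =>
    ∑ i, ∑ j, c i * c j * ((u * D i j) ^ k / ((Nat.factorial k : ℕ) : ℝ)) with hA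
  have hsum_each : ∀ i j : Fin n,
      Summable (fun k : ℕ => c i * c j * ((u * D i j) ^ k / ((Nat.factorial k : ℕ) : ℝ))) :=
    fun i j => (Real.summable_pow_div_factorial _).mul_left _
  have hAsum : Summable A := by
    rw [hA]
    refine summable_sum fun i _ => summable_sum fun j _ => hsum_each i j
  have hKa : ∑' k, A k = ∑ i, ∑ j, c i * c j * Real.exp (u * D i j) := by
    rw [hA, Summable.tsum_finsetSum (fun i _ => summable_sum fun j _ => hsum_each i j)]
    refine Finset.sum_congr rfl fun i _ => ?_
    rw [Summable.tsum_finsetSum (fun j _ => hsum_each i j)]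
    refine Finset.sum_congr rfl fun j _ => ?_
    rw [tsum_mul_left]
    congr 1
    rw [Real.exp_eq_exp_ℝ, NormedSpace.exp_eq_tsum_div]
  have haT : ∀ k : ℕ, A k = (u ^ k / ((Nat.factorial k : ℕ) : ℝ)) * T k := by
    intro k
    rw [hA, hTdef, Finset.mul_sum]
    refine Finset.sum_congr rfl fun i _ => ?_
    rw [Finset.mul_sum]
    refine Finset.sum_congr rfl fun j _ => ?_
    rw [mul_pow]
    ring
  have hTnonneg : ∀ k : ℕ, 0 ≤ T k := fun k => spf_sumsq_nonneg z c
  have hAnonneg : ∀ k : ℕ, 0 ≤ A k := by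
    intro k
    rw [haT k]
    have h1 : (0:ℝ) ≤ u ^ k / ((Nat.factorial k : ℕ) : ℝ) := by positivity
    exact mul_nonneg h1 (hTnonneg k)
  have hA0 : A 0 = (∑ i, c i) ^ 2 := by
    rw [haT 0, hTdef]
    simp only [pow_zero, Nat.factorial_zero, Nat.cast_one, div_one, one_mul, mul_one]
    rw [sq, Finset.sum_mul_sum]
  have hAk0 : 0 < A k0 := by
    rw [haT k0]
    have h1 : (0:ℝ) < u ^ k0 / ((Nat.factorial k0 : ℕ) : ℝ) := by positivity
    exact mul_pos h1 hT
  have hpair : A 0 + A k0 ≤ ∑' k, A k := by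
    have h0k : (0:ℕ) ≠ k0 := fun h => by omega
    have := Summable.sum_le_tsum ({0, k0} : Finset ℕ)
      (fun k _ => hAnonneg k) hAsum
    rwa [Finset.sum_pair h0k] at this
  rw [← hKa]
  rw [← hA0]
  linarith



lemma spf_trig {α : ℝ} (hα0 : 0 < α) {s : ℝ} (hs : -1 ≤ s) (hs1 : s ≤ 1) :
    Real.sin (Real.arccos s / 2) ^ α = ((1 - s) / 2) ^ (α / 2) := by
  have h1 : Real.sin (Real.arccos s / 2) = Real.sqrt ((1 - Real.cos (Real.arccos s)) / 2) :=
    Real.sin_half_eq_sqrt (Real.arccos_nonneg s)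
      (le_trans (Real.arccos_le_pi s) (by nlinarith [Real.pi_pos]))
  rw [h1, Real.cos_arccos hs hs1]
  have h2 : (0:ℝ) ≤ (1 - s) / 2 := by linarith
  rw [Real.sqrt_eq_rpow, ← Real.rpow_mul h2]
  congr 1
  ring


end
end SPFAUX2
section SPFAUX3
open Real Set
noncomputable section
def spfZ (d : ℕ) {n : ℕ} (x : Fin n → EuclideanSpace ℝ (Fin (d + 1))) :
    Fin n → Fin (d + 2) → ℝ := fun i a =>
  if h : (a : ℕ) < d + 1 then x i ⟨a, h⟩ else 1

lemma spfZ_inner {d n : ℕ} (x : Fin n → EuclideanSpace ℝ (Fin (d + 1))) (i j : Fin n) :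
    ∑ a, spfZ d x i a * spfZ d x j a = (inner ℝ (x i) (x j) : ℝ) + 1 := by
  rw [Fin.sum_univ_castSucc]
  have hlast : ∀ l : Fin n, spfZ d x l (Fin.last (d + 1)) = 1 := fun l =>
    dif_neg (by simp)
  have hcast : ∀ (l : Fin n) (b : Fin (d + 1)), spfZ d x l (Fin.castSucc b) = x l b := by
    intro l b
    have hb : ((Fin.castSucc b : Fin (d + 2)) : ℕ) < d + 1 := by
      rw [Fin.coe_castSucc]; exact b.isLt
    rw [spfZ, dif_pos hb]
    exact congrArg (x l) (Fin.ext (by simp))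
  simp only [hlast, hcast, mul_one]
  congr 1
  simp [PiLp.inner_apply, mul_comm]

lemma spfZ_inj {d n : ℕ} {x : Fin n → EuclideanSpace ℝ (Fin (d + 1))}
    (hx : Function.Injective x) : Function.Injective (spfZ d x) := by
  intro i j h
  apply hx
  ext b
  have h2 := congrFun h (Fin.castSucc b)
  have hb : ((Fin.castSucc b : Fin (d + 2)) : ℕ) < d + 1 := by
    rw [Fin.coe_castSucc]; exact b.isLt
  rw [spfZ, spfZ, dif_pos hb, dif_pos hb] at h2
  have he : (⟨((Fin.castSucc b : Fin (d + 2)) : ℕ), hb⟩ : Fin (d + 1)) = b :=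
    Fin.ext (by simp)
  rwa [he] at h2


end
end SPFAUX3

/-- the sine power family belongs to `Ψ_d^+` for every `d ≥ 1`,
i.e. to `Ψ_∞^+`. -/


theorem stmt_17 (α : ℝ) (hα : α ∈ Set.Ioo (0:ℝ) 2) :
    ∀ d : ℕ, 1 ≤ d → memPsiPlus d (fun θ => 1 - Real.sin (θ / 2) ^ α) := by
  obtain ⟨hα0, hα2⟩ := hα
  intro d _
  refine ⟨?_, ?_, ?_⟩
  · exact (continuous_const.sub ((Real.continuous_sin.comp
      (continuous_id.div_const 2)).rpow_const fun x => Or.inr hα0.le)).continuousOn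
  · simp [Real.zero_rpow (ne_of_gt hα0)]
  · intro n x hxnorm hxinj c hc
    set β : ℝ := α / 2 with hβ
    have hβ0 : 0 < β := half_pos hα0
    have hβ1 : β < 1 := by rw [hβ]; linarith
    set z := spfZ d x with hzdef
    set s : Fin n → Fin n → ℝ := fun i j => (inner ℝ (x i) (x j) : ℝ) with hs
    have hzin : ∀ i j, ∑ a, z i a * z j a = s i j + 1 := fun i j => spfZ_inner x i j
    have hsb : ∀ i j, -1 ≤ s i j ∧ s i j ≤ 1 := by
      intro i j
      have h1 : |s i j| ≤ ‖x i‖ * ‖x j‖ := abs_real_inner_le_norm (x i) (x j)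
      rw [hxnorm i, hxnorm j, mul_one] at h1
      exact abs_le.mp h1
    have hsii : ∀ i, s i i = 1 := by
      intro i
      have h1 : s i i = ‖x i‖ ^ 2 := real_inner_self_eq_norm_sq (x i)
      rw [h1, hxnorm i, one_pow]
    have hznorm : ∀ i, ∑ a, z i a * z i a = 2 := fun i => by
      rw [hzin i i, hsii i]; norm_num
    obtain ⟨k0, hk01, hk0pos⟩ := spf_exists_pos z (spfZ_inj hxinj) hznorm c hc
    set F : Fin n → Fin n → ℝ → ℝ := fun i j t =>
      (Real.exp (-((1 - s i j) / 2 * t)) - Real.exp (-t)) * t ^ (-1 - β) with hF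
    have hrnn : ∀ i j, 0 ≤ (1 - s i j) / 2 := fun i j => by linarith [(hsb i j).2]
    have hFint : ∀ i j, MeasureTheory.IntegrableOn (F i j) (Set.Ioi 0) := by
      intro i j
      have h1 := spf_integrable (r := 1) hβ0 hβ1 zero_le_one
      have h2 := spf_integrable hβ0 hβ1 (hrnn i j)
      refine (h1.sub h2).congr (Filter.Eventually.of_forall fun t => ?_)
      simp only [hF, one_mul, Pi.sub_apply]
      ring
    have hterm : ∀ i j, (1 : ℝ) - Real.sin (Real.arccos (s i j) / 2) ^ α
        = (spfJ β)⁻¹ * ∫ t in Set.Ioi (0:ℝ), F i j t := by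
      intro i j
      rw [spf_trig hα0 (hsb i j).1 (hsb i j).2, ← hβ]
      exact spf_repr hβ0 hβ1 (hrnn i j)
    have hint_ij : ∀ i j, MeasureTheory.Integrable (fun t => c i * c j * F i j t)
        (MeasureTheory.volume.restrict (Set.Ioi 0)) := fun i j => (hFint i j).const_mul _
    have hint_i : ∀ i, MeasureTheory.Integrable (fun t => ∑ j, c i * c j * F i j t)
        (MeasureTheory.volume.restrict (Set.Ioi 0)) :=
      fun i => MeasureTheory.integrable_finset_sum _ (fun j _ => hint_ij i j)
    have hEint : MeasureTheory.IntegrableOn (fun t => ∑ i, ∑ j, c i * c j * F i j t)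
        (Set.Ioi 0) :=
      MeasureTheory.integrable_finset_sum _ (fun i _ => hint_i i)
    have hswap : (∫ t in Set.Ioi (0:ℝ), ∑ i, ∑ j, c i * c j * F i j t)
        = ∑ i, ∑ j, ∫ t in Set.Ioi (0:ℝ), c i * c j * F i j t := by
      rw [MeasureTheory.integral_finset_sum _ (fun i _ => hint_i i)]
      exact Finset.sum_congr rfl fun i _ =>
        MeasureTheory.integral_finset_sum _ (fun j _ => hint_ij i j)
    have hEpos : ∀ t : ℝ, t ∈ Set.Ioi (0:ℝ) → 0 < ∑ i, ∑ j, c i * c j * F i j t := by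
      intro t ht
      have ht0 : (0:ℝ) < t := ht
      have hEeq : ∑ i, ∑ j, c i * c j * F i j t
          = ((∑ i, ∑ j, c i * c j * Real.exp ((t / 2) * (∑ a, z i a * z j a)))
              - (∑ i, c i) ^ 2) * (Real.exp (-t) * t ^ (-1 - β)) := by
        have hrhs : ((∑ i, ∑ j, c i * c j * Real.exp ((t / 2) * (∑ a, z i a * z j a)))
              - (∑ i, c i) ^ 2) * (Real.exp (-t) * t ^ (-1 - β))
            = ∑ i, ∑ j, (c i * c j * Real.exp ((t / 2) * (∑ a, z i a * z j a))
                  * (Real.exp (-t) * t ^ (-1 - β))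
                - c i * c j * (Real.exp (-t) * t ^ (-1 - β))) := by
          rw [sq, Finset.sum_mul_sum]
          simp only [sub_mul, Finset.sum_mul, ← Finset.sum_sub_distrib]
        rw [hrhs]
        refine Finset.sum_congr rfl fun i _ => Finset.sum_congr rfl fun j _ => ?_
        simp only [hF]
        rw [hzin i j]
        rw [show Real.exp (-((1 - s i j) / 2 * t))
            = Real.exp ((t / 2) * (s i j + 1)) * Real.exp (-t) from by
          rw [← Real.exp_add]; congr 1; ring]
        ring
      rw [hEeq]
      have hK := spf_K_pos z c hk01 hk0pos (u := t / 2) (by linarith)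
      have hP : 0 < Real.exp (-t) * t ^ (-1 - β) :=
        mul_pos (Real.exp_pos _) (Real.rpow_pos_of_pos ht0 _)
      exact mul_pos (sub_pos.mpr hK) hP
    have hIoc : IntervalIntegrable (fun t => ∑ i, ∑ j, c i * c j * F i j t)
        MeasureTheory.volume 1 2 := by
      rw [intervalIntegrable_iff_integrableOn_Ioc_of_le one_le_two]
      exact hEint.mono_set fun y hy => lt_trans one_pos hy.1
    have hpos12 : 0 < ∫ t in (1:ℝ)..2, ∑ i, ∑ j, c i * c j * F i j t :=
      intervalIntegral.intervalIntegral_pos_of_pos_on hIoc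
        (fun y hy => hEpos y (lt_trans one_pos hy.1)) one_lt_two
    have hnn : 0 ≤ᵐ[MeasureTheory.volume.restrict (Set.Ioi (0:ℝ))]
        fun t => ∑ i, ∑ j, c i * c j * F i j t := by
      filter_upwards [MeasureTheory.ae_restrict_mem measurableSet_Ioi] with t ht
      exact (hEpos t ht).le
    have hle : (∫ t in Set.Ioc (1:ℝ) 2, ∑ i, ∑ j, c i * c j * F i j t)
        ≤ ∫ t in Set.Ioi (0:ℝ), ∑ i, ∑ j, c i * c j * F i j t :=
      MeasureTheory.setIntegral_mono_set hEint hnn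
        (HasSubset.Subset.eventuallyLE fun y hy => lt_trans one_pos hy.1)
    rw [intervalIntegral.integral_of_le one_le_two] at hpos12
    have hintpos : 0 < ∫ t in Set.Ioi (0:ℝ), ∑ i, ∑ j, c i * c j * F i j t :=
      lt_of_lt_of_le hpos12 hle
    have hJpos := spfJ_pos hβ0 hβ1
    have final_eq : ∑ i, ∑ j, c i * c j * (1 - Real.sin (Real.arccos (s i j) / 2) ^ α)
        = (spfJ β)⁻¹ * ∫ t in Set.Ioi (0:ℝ), ∑ i, ∑ j, c i * c j * F i j t := by
      rw [hswap, Finset.mul_sum]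
      refine Finset.sum_congr rfl fun i _ => ?_
      rw [Finset.mul_sum]
      refine Finset.sum_congr rfl fun j _ => ?_
      rw [hterm i j, MeasureTheory.integral_const_mul]
      ring
    have hfinal : 0 < ∑ i, ∑ j, c i * c j * (1 - Real.sin (Real.arccos (s i j) / 2) ^ α) := by
      rw [final_eq]
      exact mul_pos (inv_pos.mpr hJpos) hintpos
    exact hfinal
end
end
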